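/- Let A ⊆ X_i^* be computably enumerable and let g : A → X_2^* be a Gödel numbering. Then there exists a constant c > 0 such that for all u ∈ A, |H_2(g(u)) − log_2(i)·H_i(u)| ≤ c. -/

import Mathlib

open scoped ENNReal

/-- Finite strings over an alphabet with `i` letters. -/
abbrev Str (i : ℕ) : Type := List (Fin i)

/-- A set of strings is prefix-free: no element is a proper prefix of another. -/
def PrefixFree {i : ℕ} (S : Set (Str i)) : Prop :=
  ∀ x ∈ S, ∀ y ∈ S, x <+: y → x = y

/-- A self-delimiting machine over the alphabet with `i` letters: a partial computable
function on strings whose domain is prefix-free. -/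
structure Machine (i : ℕ) where
  f : Str i →. Str i
  partrec : Partrec f
  prefixFree : PrefixFree f.Dom

/-- Program-size complexity of `x` relative to the machine `T`:
the least length of a program `y` with `T(y) = x` (with `min ∅ = ∞`). -/
noncomputable def Hc {i : ℕ} (T : Machine i) (x : Str i) : ℝ≥0∞ :=
  sInf {n : ℝ≥0∞ | ∃ y : Str i, (y.length : ℝ≥0∞) = n ∧ x ∈ T.f y}

/-- `U` is a universal machine: it minimizes program-size complexity up to an
additive constant among all machines. -/
def IsUniversal {i : ℕ} (U : Machine i) : Prop :=
  ∀ T : Machine i, ∃ c : ℕ, ∀ x : Str i, Hc U x ≤ Hc T x + (c : ℝ≥0∞)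

/-- A set of strings is computably enumerable if it is the domain of a
partial computable function. -/
def CEset {i : ℕ} (A : Set (Str i)) : Prop :=
  ∃ f : Str i →. Str i, Partrec f ∧ A = f.Dom

/-- A Gödel numbering for `L`: a computable function into binary strings,
injective on `L`. -/
def GoedelNumbering {i : ℕ} (L : Set (Str i)) (g : Str i → Str 2) : Prop :=
  Computable g ∧ Set.InjOn g L

namespace InvAux

def sval {b : ℕ} (x : Str b) : ℕ := x.foldl (fun a d => a * b + d.val) 0

lemma sval_foldl {b : ℕ} (x : Str b) (a : ℕ) :
    x.foldl (fun a d => a * b + d.val) a = a * b ^ x.length + sval x := by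
  induction x generalizing a with
  | nil => simp [sval]
  | cons d t ih =>
    show t.foldl _ (a * b + d.val) = a * b ^ (d :: t).length + sval (d :: t)
    have h2 : sval (d :: t) = d.val * b ^ t.length + sval t := by
      show t.foldl _ (0 * b + d.val) = _
      rw [ih]; ring
    rw [ih, h2]; simp [List.length_cons]; ring

lemma sval_cons {b : ℕ} (d : Fin b) (t : Str b) :
    sval (d :: t) = d.val * b ^ t.length + sval t := by
  show t.foldl _ (0 * b + d.val) = _
  rw [sval_foldl]; ring

lemma sval_append {b : ℕ} (x y : Str b) :
    sval (x ++ y) = sval x * b ^ y.length + sval y := by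
  unfold sval
  rw [List.foldl_append, sval_foldl]
  rfl

lemma sval_lt {b : ℕ} (x : Str b) : sval x < b ^ x.length := by
  induction x with
  | nil => simp [sval]
  | cons d t ih =>
    rw [sval_cons]
    have hd : d.val + 1 ≤ b := d.isLt
    calc d.val * b ^ t.length + sval t < (d.val + 1) * b ^ t.length := by
          have := ih; nlinarith
      _ ≤ b * b ^ t.length := Nat.mul_le_mul_right _ hd
      _ = b ^ (d :: t).length := by rw [List.length_cons]; ring

lemma sval_inj {b : ℕ} : ∀ {x y : Str b}, x.length = y.length → sval x = sval y → x = y := by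
  intro x
  induction x with
  | nil => intro y hl _; exact (List.length_eq_zero_iff.1 hl.symm).symm
  | cons d t ih =>
    intro y hl hv
    cases y with
    | nil => simp at hl
    | cons e s =>
      simp only [List.length_cons, Nat.add_right_cancel_iff] at hl
      rw [sval_cons, sval_cons, ← hl] at hv
      have hst : sval t < b ^ t.length := sval_lt t
      have hss : sval s < b ^ t.length := by rw [hl]; exact sval_lt s
      have hB : 0 < b ^ t.length := Nat.pow_pos (n := _) d.pos
      have hde : d.val = e.val := by
        have h1 : (d.val * b ^ t.length + sval t) / b ^ t.length = d.val := by
          rw [show d.val * b ^ t.length + sval t = sval t + b ^ t.length * d.val by ring,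
            Nat.add_mul_div_left _ _ hB, Nat.div_eq_of_lt hst]; omega
        have h2 : (e.val * b ^ t.length + sval s) / b ^ t.length = e.val := by
          rw [show e.val * b ^ t.length + sval s = sval s + b ^ t.length * e.val by ring,
            Nat.add_mul_div_left _ _ hB, Nat.div_eq_of_lt hss]; omega
        rw [← h1, ← h2, hv]
      have hts : sval t = sval s := by
        rw [hde] at hv; omega
      have : t = s := ih hl hts
      rw [this, Fin.ext hde]

lemma prefix_sval {b : ℕ} {x y : Str b} (h : x <+: y) :
    sval x * b ^ (y.length - x.length) ≤ sval y ∧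
      sval y < (sval x + 1) * b ^ (y.length - x.length) := by
  obtain ⟨t, rfl⟩ := h
  have hΔ : (x ++ t).length - x.length = t.length := by simp
  rw [hΔ, sval_append]
  have := sval_lt t
  constructor
  · omega
  · nlinarith

lemma prefix_of_sandwich {b : ℕ} (hb : 0 < b) {x y : Str b} (hl : x.length ≤ y.length)
    (h1 : sval x * b ^ (y.length - x.length) ≤ sval y)
    (h2 : sval y < (sval x + 1) * b ^ (y.length - x.length)) : x <+: y := by
  set t := y.take x.length with ht0
  have ht : t <+: y := List.take_prefix _ _
  have hlt : t.length = x.length := by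
    rw [ht0, List.length_take]; omega
  obtain ⟨h3, h4⟩ := prefix_sval ht
  rw [hlt] at h3 h4
  have hB : 0 < b ^ (y.length - x.length) := Nat.pow_pos (n := _) hb
  have hxt : sval x = sval t := by
    have e1 : sval x * b ^ (y.length - x.length) < (sval t + 1) * b ^ (y.length - x.length) :=
      lt_of_le_of_lt h1 h4
    have e2 : sval t * b ^ (y.length - x.length) < (sval x + 1) * b ^ (y.length - x.length) :=
      lt_of_le_of_lt h3 h2
    have f1 : sval x < sval t + 1 := lt_of_mul_lt_mul_right e1 (Nat.zero_le _)
    have f2 : sval t < sval x + 1 := lt_of_mul_lt_mul_right e2 (Nat.zero_le _)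
    omega
  have : x = t := sval_inj hlt.symm hxt
  rw [this]; exact ht

/-- lower endpoint of the base-`b` interval of `x`, as a rational -/
noncomputable def lo {b : ℕ} (x : Str b) : ℚ := (sval x : ℚ) / (b : ℚ) ^ x.length

noncomputable def hi {b : ℕ} (x : Str b) : ℚ := ((sval x : ℚ) + 1) / (b : ℚ) ^ x.length

lemma comparable_aux {b : ℕ} (hb : 0 < b) {x y : Str b} {q : ℚ} (hl : x.length ≤ y.length)
    (hx1 : lo x ≤ q) (hx2 : q < hi x) (hy1 : lo y ≤ q) (hy2 : q < hi y) : x <+: y := by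
  have hbq : (0 : ℚ) < (b : ℚ) := by exact_mod_cast hb
  have hpx : (0 : ℚ) < (b : ℚ) ^ x.length := pow_pos hbq _
  have hpy : (0 : ℚ) < (b : ℚ) ^ y.length := pow_pos hbq _
  have hsplit : (b : ℚ) ^ y.length = (b : ℚ) ^ x.length * (b : ℚ) ^ (y.length - x.length) := by
    rw [← pow_add]; congr 1; omega
  -- first: sval x * b^Δ ≤ sval y
  have k1 : (sval x : ℚ) * (b : ℚ) ^ (y.length - x.length) < (sval y : ℚ) + 1 := by
    have t1 : (sval x : ℚ) / (b : ℚ) ^ x.length < ((sval y : ℚ) + 1) / (b : ℚ) ^ y.length :=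
      lt_of_le_of_lt hx1 hy2
    rw [div_lt_div_iff₀ hpx hpy] at t1
    rw [hsplit] at t1
    nlinarith
  have k2 : (sval y : ℚ) < ((sval x : ℚ) + 1) * (b : ℚ) ^ (y.length - x.length) := by
    have t1 : (sval y : ℚ) / (b : ℚ) ^ y.length < ((sval x : ℚ) + 1) / (b : ℚ) ^ x.length :=
      lt_of_le_of_lt hy1 hx2
    rw [div_lt_div_iff₀ hpy hpx] at t1
    rw [hsplit] at t1
    nlinarith
  have n1 : sval x * b ^ (y.length - x.length) ≤ sval y := by
    have : (sval x * b ^ (y.length - x.length) : ℚ) < (sval y : ℚ) + 1 := by push_cast; exact_mod_cast k1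
    exact_mod_cast by exact_mod_cast Nat.lt_succ_iff.mp (by exact_mod_cast this)
  have n2 : sval y < (sval x + 1) * b ^ (y.length - x.length) := by exact_mod_cast k2
  exact prefix_of_sandwich hb hl n1 n2

lemma comparable_of_common_point {b : ℕ} (hb : 0 < b) {x y : Str b} {q : ℚ}
    (hx1 : lo x ≤ q) (hx2 : q < hi x) (hy1 : lo y ≤ q) (hy2 : q < hi y) :
    x <+: y ∨ y <+: x := by
  rcases le_total x.length y.length with h | h
  · exact Or.inl (comparable_aux hb h hx1 hx2 hy1 hy2)
  · exact Or.inr (comparable_aux hb h hy1 hy2 hx1 hx2)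

def encLen (b1 b2 n : ℕ) : ℕ :=
  (List.range (b1 * n + 2)).foldl (fun acc L => if 2 * b1 ^ n ≤ b2 ^ L then acc else acc + 1) 0

lemma foldl_count_eq {P : ℕ → Prop} [DecidablePred P] {m : ℕ}
    (hP : ∀ L, ¬ P L ↔ L < m) (N : ℕ) :
    (List.range N).foldl (fun acc L => if P L then acc else acc + 1) 0 = min m N := by
  induction N with
  | zero => simp
  | succ N ih =>
    rw [List.range_succ, List.foldl_append]
    simp only [List.foldl_cons, List.foldl_nil]
    rw [ih]
    by_cases h : P N
    · rw [if_pos h]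
      have : ¬ N < m := fun hh => ((hP N).2 hh) h
      omega
    · rw [if_neg h]
      have : N < m := (hP N).1 h
      omega

lemma encLen_spec {b1 b2 : ℕ} (hb1 : 2 ≤ b1) (hb2 : 2 ≤ b2) (n : ℕ) :
    2 * b1 ^ n ≤ b2 ^ encLen b1 b2 n ∧
      ∀ L, L < encLen b1 b2 n → b2 ^ L < 2 * b1 ^ n := by
  have hwit : 2 * b1 ^ n ≤ b2 ^ (b1 * n + 1) :=
    calc 2 * b1 ^ n ≤ 2 * 2 ^ (b1 * n) := by
          have h1 : b1 ^ n ≤ 2 ^ (b1 * n) := by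
            rw [pow_mul]
            exact Nat.pow_le_pow_left (le_of_lt (Nat.lt_two_pow_self (n := b1))) n
          omega
      _ = 2 ^ (b1 * n + 1) := by ring
      _ ≤ b2 ^ (b1 * n + 1) := Nat.pow_le_pow_left hb2 _
  have hex : ∃ L, 2 * b1 ^ n ≤ b2 ^ L := ⟨b1 * n + 1, hwit⟩
  have hiff : ∀ L, ¬ (2 * b1 ^ n ≤ b2 ^ L) ↔ L < Nat.find hex := by
    intro L
    constructor
    · intro h
      by_contra hh
      push_neg at hh
      exact h (le_trans (Nat.find_spec hex) (Nat.pow_le_pow_right (by omega) hh))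
    · intro h
      exact Nat.find_min hex h
  have hm : Nat.find hex ≤ b1 * n + 1 := Nat.find_min' hex hwit
  have heq : encLen b1 b2 n = Nat.find hex := by
    unfold encLen
    rw [foldl_count_eq hiff]
    omega
  rw [heq]
  exact ⟨Nat.find_spec hex, fun L hL => by
    have := (hiff L).2 hL; omega⟩

/-- `p` is a valid base-`b2` interval code for the base-`b1` string `y`. -/
def Valid (b1 b2 : ℕ) (y : Str b1) (p : Str b2) : Prop :=
  p.length = encLen b1 b2 y.length ∧
  sval y * b2 ^ p.length ≤ sval p * b1 ^ y.length ∧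
  (sval p + 1) * b1 ^ y.length ≤ (sval y + 1) * b2 ^ p.length

instance (b1 b2 : ℕ) (y : Str b1) (p : Str b2) : Decidable (Valid b1 b2 y p) := by
  unfold Valid; infer_instance

lemma Valid.contain {b1 b2 : ℕ} (hb1 : 0 < b1) (hb2 : 0 < b2) {y : Str b1} {p : Str b2}
    (h : Valid b1 b2 y p) : lo y ≤ lo p ∧ hi p ≤ hi y := by
  obtain ⟨-, h1, h2⟩ := h
  have q1 : (0:ℚ) < (b1:ℚ) ^ y.length := pow_pos (by exact_mod_cast hb1) _
  have q2 : (0:ℚ) < (b2:ℚ) ^ p.length := pow_pos (by exact_mod_cast hb2) _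
  constructor
  · rw [lo, lo, div_le_div_iff₀ q1 q2]
    have : (sval y : ℚ) * (b2:ℚ) ^ p.length ≤ (sval p : ℚ) * (b1:ℚ) ^ y.length := by
      exact_mod_cast h1
    linarith
  · rw [hi, hi, div_le_div_iff₀ q2 q1]
    have : ((sval p : ℚ) + 1) * (b1:ℚ) ^ y.length ≤ ((sval y : ℚ) + 1) * (b2:ℚ) ^ p.length := by
      exact_mod_cast h2
    linarith

lemma prefix_contain {b : ℕ} (hb : 0 < b) {p p' : Str b} (h : p <+: p') :
    lo p ≤ lo p' ∧ hi p' ≤ hi p := by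
  obtain ⟨h1, h2⟩ := prefix_sval h
  have hl : p.length ≤ p'.length := h.length_le
  have q1 : (0:ℚ) < (b:ℚ) ^ p.length := pow_pos (by exact_mod_cast hb) _
  have q2 : (0:ℚ) < (b:ℚ) ^ p'.length := pow_pos (by exact_mod_cast hb) _
  have hsplit : (b:ℚ) ^ p'.length = (b:ℚ) ^ p.length * (b:ℚ) ^ (p'.length - p.length) := by
    rw [← pow_add]; congr 1; omega
  have c1 : (sval p : ℚ) * (b:ℚ) ^ (p'.length - p.length) ≤ (sval p' : ℚ) := by
    exact_mod_cast h1
  have c2 : (sval p' : ℚ) + 1 ≤ ((sval p : ℚ) + 1) * (b:ℚ) ^ (p'.length - p.length) := by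
    have : (sval p' : ℚ) < ((sval p : ℚ) + 1) * ((b:ℚ) ^ (p'.length - p.length)) := by
      exact_mod_cast h2
    have hint : ((sval p' + 1 : ℕ) : ℚ) ≤ (((sval p + 1) * b ^ (p'.length - p.length) : ℕ) : ℚ) := by
      exact_mod_cast h2
    push_cast at hint
    linarith
  constructor
  · rw [lo, lo, div_le_div_iff₀ q1 q2, hsplit]
    nlinarith
  · rw [hi, hi, div_le_div_iff₀ q2 q1, hsplit]
    nlinarith

lemma lo_lt_hi {b : ℕ} (hb : 0 < b) (p : Str b) : lo p < hi p := by
  have q1 : (0:ℚ) < (b:ℚ) ^ p.length := pow_pos (by exact_mod_cast hb) _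
  rw [lo, hi, div_lt_div_iff₀ q1 q1]
  nlinarith

/-- main geometric lemma: two valid codes related by prefix force the coded
strings to be comparable. -/
lemma valid_prefix_comparable {b1 b2 : ℕ} (hb1 : 0 < b1) (hb2 : 0 < b2)
    {y y' : Str b1} {p p' : Str b2} (h : Valid b1 b2 y p) (h' : Valid b1 b2 y' p')
    (hpp : p <+: p') : y <+: y' ∨ y' <+: y := by
  obtain ⟨c1, c2⟩ := prefix_contain hb2 hpp
  obtain ⟨d1, d2⟩ := h.contain hb1 hb2
  obtain ⟨d1', d2'⟩ := h'.contain hb1 hb2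
  have hq := lo_lt_hi hb2 p'
  exact comparable_of_common_point hb1 (q := lo p')
    (le_trans d1 c1) (lt_of_lt_of_le hq (le_trans c2 d2))
    d1' (lt_of_lt_of_le hq d2')

lemma valid_prefix_eq {b1 b2 : ℕ} {y y' : Str b1} {p p' : Str b2}
    (h : Valid b1 b2 y p) (h' : Valid b1 b2 y' p') (hyy : y = y') (hpp : p <+: p') : p = p' := by
  apply hpp.eq_of_length
  rw [h.1, h'.1, hyy]

/-- big-endian base-`b` numeral of length `L` for the number `w` -/
def sOf (b L w : ℕ) : Str b :=
  if h : 0 < b then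
    (List.range L).map (fun j => ⟨w / b ^ (L - 1 - j) % b, Nat.mod_lt _ h⟩) else []

lemma sOf_length {b : ℕ} (h : 0 < b) (L w : ℕ) : (sOf b L w).length = L := by
  rw [sOf, dif_pos h, List.length_map, List.length_range]

lemma sOf_succ {b : ℕ} (h : 0 < b) (L w : ℕ) :
    sOf b (L + 1) w = (⟨w / b ^ L % b, Nat.mod_lt _ h⟩ : Fin b) :: sOf b L w := by
  rw [sOf, sOf, dif_pos h, dif_pos h, List.range_succ_eq_map]
  rw [List.map_cons, List.map_map]
  congr 1
  · simp only [Function.comp_def]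
    apply List.map_congr_left
    intro j hj
    apply Fin.ext
    show w / b ^ (L + 1 - 1 - (j + 1)) % b = w / b ^ (L - 1 - j) % b
    have : L + 1 - 1 - (j + 1) = L - 1 - j := by omega
    rw [this]

lemma sval_sOf {b : ℕ} (h : 0 < b) (L w : ℕ) : sval (sOf b L w) = w % b ^ L := by
  induction L with
  | zero =>
    rw [sOf, dif_pos h]
    simp [sval, Nat.mod_one]
  | succ L ih =>
    rw [sOf_succ h, sval_cons, sOf_length h, ih]
    simp only [Fin.val_mk]
    have h2 := Nat.mod_mul (x := w) (a := b ^ L) (b := b)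
    have h3 : w / b ^ L % b * b ^ L = b ^ L * (w / b ^ L % b) := Nat.mul_comm _ _
    rw [pow_succ]
    omega

lemma exists_valid {b1 b2 : ℕ} (hb1 : 2 ≤ b1) (hb2 : 2 ≤ b2) (y : Str b1) :
    ∃ p : Str b2, Valid b1 b2 y p := by
  obtain ⟨hA, -⟩ := encLen_spec hb1 hb2 y.length
  set n := y.length with hn
  set L := encLen b1 b2 n with hL
  set v := sval y with hv
  set d := b1 ^ n with hdd
  set B := b2 ^ L with hBB
  have hd : 0 < d := pow_pos (by omega) n
  have hD : 0 < B := pow_pos (by omega) L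
  set a := v * B + d - 1 with ha
  set w := a / d with hw
  have hkey : d * w + a % d = a := Nat.div_add_mod a d
  have hmod : a % d < d := Nat.mod_lt a hd
  have hcomm : w * d = d * w := Nat.mul_comm _ _
  have h1 : v * B ≤ w * d := by omega
  have h2 : w * d ≤ v * B + d - 1 := by omega
  have hexp1 : (w + 1) * d = w * d + d := by ring
  have hexp2 : (v + 1) * B = v * B + B := by ring
  have h3 : (w + 1) * d ≤ (v + 1) * B := by omega
  have hv1 : v + 1 ≤ d := sval_lt y
  have hwlt : w < B := by
    have h4 : (w + 1) * d ≤ B * d := by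
      calc (w + 1) * d ≤ (v + 1) * B := h3
        _ ≤ d * B := Nat.mul_le_mul_right _ hv1
        _ = B * d := by ring
    have := Nat.le_of_mul_le_mul_right h4 hd
    omega
  refine ⟨sOf b2 L w, ?_, ?_, ?_⟩
  · rw [sOf_length (by omega)]
  · rw [sval_sOf (by omega), sOf_length (by omega), Nat.mod_eq_of_lt hwlt]
    exact h1
  · rw [sval_sOf (by omega), sOf_length (by omega), Nat.mod_eq_of_lt hwlt]
    exact h3

lemma encLen_le_logb1 {i : ℕ} (hi : 2 ≤ i) (n : ℕ) :
    (encLen i 2 n : ℝ) ≤ n * Real.logb 2 i + 2 := by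
  obtain ⟨hA, hmin⟩ := encLen_spec hi (le_refl 2) n
  set L := encLen i 2 n with hLdef
  have hlogb : 0 ≤ Real.logb 2 i := Real.logb_nonneg (by norm_num) (by exact_mod_cast hi.trans' (by norm_num))
  rcases Nat.eq_zero_or_pos L with h0 | hpos
  · rw [h0]
    push_cast
    positivity
  · have hlt : 2 ^ (L - 1) < 2 * i ^ n := hmin (L - 1) (by omega)
    have h2L : (2 : ℕ) ^ L < 4 * i ^ n := by
      have : 2 ^ L = 2 * 2 ^ (L - 1) := by
        rw [← pow_succ']
        congr 1
        omega
      omega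
    have h2R : (2 : ℝ) ^ L < 4 * (i : ℝ) ^ n := by exact_mod_cast h2L
    have hmono := Real.logb_lt_logb (b := 2) (by norm_num) (by positivity) h2R
    rw [Real.logb_pow] at hmono
    rw [Real.logb_self_eq_one (by norm_num)] at hmono
    have hir : (0:ℝ) < (i:ℝ) ^ n := by positivity
    rw [Real.logb_mul (by norm_num) (ne_of_gt hir), Real.logb_pow] at hmono
    have h4 : Real.logb 2 4 = 2 := by
      rw [show (4:ℝ) = 2 ^ (2:ℕ) by norm_num, Real.logb_pow,
        Real.logb_self_eq_one (by norm_num)]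
      norm_num
    rw [h4] at hmono
    linarith

lemma encLen_le_logb2 {i : ℕ} (hi : 2 ≤ i) (m : ℕ) :
    Real.logb 2 i * (encLen 2 i m : ℝ) ≤ (m : ℝ) + 1 + Real.logb 2 i := by
  obtain ⟨hA, hmin⟩ := encLen_spec (le_refl 2) hi m
  set L := encLen 2 i m with hLdef
  have hL1 : 1 ≤ L := by
    by_contra h
    push_neg at h
    interval_cases L
    · simp at hA
      have : 0 < 2 ^ m := Nat.pow_pos (n := _) (by norm_num)
      omega
  have hlt : i ^ (L - 1) < 2 * 2 ^ m := hmin (L - 1) (by omega)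
  have h1 : (i : ℕ) ^ (L - 1) < 2 ^ (m + 1) := by
    rw [pow_succ']
    omega
  have h1R : (i : ℝ) ^ (L - 1) < 2 ^ (m + 1) := by exact_mod_cast h1
  have hipos : (0:ℝ) < (i:ℝ) := by positivity
  have hmono := Real.logb_lt_logb (b := 2) (by norm_num) (by positivity) h1R
  rw [Real.logb_pow, Real.logb_pow, Real.logb_self_eq_one (by norm_num)] at hmono
  have hcast : ((L - 1 : ℕ) : ℝ) = (L : ℝ) - 1 := by
    have : (1:ℕ) ≤ L := hL1
    push_cast [Nat.cast_sub this]
    ring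
  rw [hcast] at hmono
  push_cast at hmono
  have hexp : ((L : ℝ) - 1) * Real.logb 2 i = (L : ℝ) * Real.logb 2 i - Real.logb 2 i := by ring
  rw [hexp] at hmono
  have hcm : Real.logb 2 (i : ℝ) * (L : ℝ) = (L : ℝ) * Real.logb 2 (i : ℝ) := mul_comm _ _
  linarith

lemma one_le_logb {i : ℕ} (hi : 2 ≤ i) : 1 ≤ Real.logb 2 i := by
  have h2 : Real.logb 2 2 = 1 := Real.logb_self_eq_one (by norm_num)
  rw [← h2]
  rcases eq_or_lt_of_le hi with h | h
  · rw [← h]; norm_num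
  · exact le_of_lt (Real.logb_lt_logb (by norm_num) (by norm_num) (by exact_mod_cast h))

open Nat.Partrec (Code)
open Nat.Partrec.Code

lemma primrec_sval {b : ℕ} : Primrec (sval (b := b)) := by
  have h : Primrec (fun q : Str b × (ℕ × Fin b) => q.2.1 * b + (q.2.2 : ℕ)) :=
    Primrec.nat_add.comp
      (Primrec.nat_mul.comp (Primrec.fst.comp Primrec.snd) (Primrec.const b))
      (Primrec.fin_val.comp (Primrec.snd.comp Primrec.snd))
  exact (Primrec.list_foldl Primrec.id (Primrec.const 0) h.to₂).of_eq fun x => rfl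

lemma primrec_pow : Primrec₂ ((· ^ ·) : ℕ → ℕ → ℕ) :=
  Primrec₂.unpaired'.1 Nat.Primrec.pow

lemma primrec_encLen (b1 b2 : ℕ) : Primrec (encLen b1 b2) := by
  have hf : Primrec fun n => List.range (b1 * n + 2) :=
    Primrec.list_range.comp
      (Primrec.nat_add.comp (Primrec.nat_mul.comp (Primrec.const b1) Primrec.id)
        (Primrec.const 2))
  have hcond : PrimrecPred (fun q : ℕ × ℕ × ℕ => 2 * b1 ^ q.1 ≤ b2 ^ q.2.2) :=
    PrimrecRel.comp Primrec.nat_le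
      (Primrec.nat_mul.comp (Primrec.const 2)
        (primrec_pow.comp (Primrec.const b1) Primrec.fst))
      (primrec_pow.comp (Primrec.const b2) (Primrec.snd.comp Primrec.snd))
  have hh : Primrec fun q : ℕ × ℕ × ℕ =>
      if 2 * b1 ^ q.1 ≤ b2 ^ q.2.2 then q.2.1 else q.2.1 + 1 :=
    Primrec.ite hcond (Primrec.fst.comp Primrec.snd)
      (Primrec.succ.comp (Primrec.fst.comp Primrec.snd))
  exact (Primrec.list_foldl hf (Primrec.const 0) hh.to₂).of_eq fun n => rfl

lemma primrec_valid (b1 b2 : ℕ) : PrimrecRel (Valid b1 b2) := by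
  have hlen1 : Primrec fun q : Str b1 × Str b2 => q.1.length :=
    Primrec.list_length.comp Primrec.fst
  have hlen2 : Primrec fun q : Str b1 × Str b2 => q.2.length :=
    Primrec.list_length.comp Primrec.snd
  have hsv1 : Primrec fun q : Str b1 × Str b2 => sval q.1 := primrec_sval.comp Primrec.fst
  have hsv2 : Primrec fun q : Str b1 × Str b2 => sval q.2 := primrec_sval.comp Primrec.snd
  have P1 : PrimrecPred fun q : Str b1 × Str b2 => q.2.length = encLen b1 b2 q.1.length :=
    PrimrecRel.comp Primrec.eq hlen2 ((primrec_encLen b1 b2).comp hlen1)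
  have P2 : PrimrecPred fun q : Str b1 × Str b2 =>
      sval q.1 * b2 ^ q.2.length ≤ sval q.2 * b1 ^ q.1.length :=
    PrimrecRel.comp Primrec.nat_le
      (Primrec.nat_mul.comp hsv1 (primrec_pow.comp (Primrec.const b2) hlen2))
      (Primrec.nat_mul.comp hsv2 (primrec_pow.comp (Primrec.const b1) hlen1))
  have P3 : PrimrecPred fun q : Str b1 × Str b2 =>
      (sval q.2 + 1) * b1 ^ q.1.length ≤ (sval q.1 + 1) * b2 ^ q.2.length :=
    PrimrecRel.comp Primrec.nat_le
      (Primrec.nat_mul.comp (Primrec.succ.comp hsv2)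
        (primrec_pow.comp (Primrec.const b1) hlen1))
      (Primrec.nat_mul.comp (Primrec.succ.comp hsv1)
        (primrec_pow.comp (Primrec.const b2) hlen2))
  have := P1.and (P2.and P3)
  exact this.of_eq fun q => by simp [Valid]

/-- simulation of the machine coded by `c` (over alphabet `b1`) on interval-coded
programs over alphabet `b2`; returns the encoded output. -/
def machF (b1 b2 : ℕ) (c : Code) (p : Str b2) : Part ℕ :=
  Nat.rfindOpt fun n =>
    (Encodable.decode (α := Str b1) n.unpair.1).bind fun y =>
      if Valid b1 b2 y p then evaln n.unpair.2 c (Encodable.encode y) else none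

lemma machF_partrec (b1 b2 : ℕ) (c : Code) : Partrec (machF b1 b2 c) := by
  apply Partrec.rfindOpt
  have hdec : Primrec fun q : Str b2 × ℕ => (Encodable.decode (α := Str b1) q.2.unpair.1) :=
    Primrec.decode.comp (Primrec.fst.comp (Primrec.unpair.comp Primrec.snd))
  have hcond : PrimrecRel fun (q : Str b2 × ℕ) (y : Str b1) => Valid b1 b2 y q.1 :=
    (primrec_valid b1 b2).comp Primrec.snd (Primrec.fst.comp Primrec.fst)
  have heval : Primrec fun q : (Str b2 × ℕ) × Str b1 =>
      evaln q.1.2.unpair.2 c (Encodable.encode q.2) :=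
    primrec_evaln.comp
      (((Primrec.snd.comp (Primrec.unpair.comp (Primrec.snd.comp Primrec.fst))).pair
        (Primrec.const c)).pair (Primrec.encode.comp Primrec.snd))
  have hbody : Primrec₂ fun (q : Str b2 × ℕ) (y : Str b1) =>
      if Valid b1 b2 y q.1 then evaln q.2.unpair.2 c (Encodable.encode y) else none :=
    (Primrec.ite (hcond.comp Primrec.fst Primrec.snd) heval (Primrec.const none)).to₂
  exact (Primrec.option_bind hdec hbody).to_comp

lemma rfindOpt_eq_some {α} {f : ℕ → Option α} {a : α} (h1 : ∃ n, f n = some a)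
    (h2 : ∀ n b, f n = some b → b = a) : Nat.rfindOpt f = Part.some a := by
  obtain ⟨n0, hn0⟩ := h1
  have hd : (Nat.rfindOpt f).Dom := Nat.rfindOpt_dom.2 ⟨n0, a, hn0⟩
  obtain ⟨b, hb⟩ := Part.dom_iff_mem.1 hd
  obtain ⟨n, hn⟩ := Nat.rfindOpt_spec hb
  rw [h2 n b hn] at hb
  exact Part.eq_some_iff.2 hb

section MachineSim

variable {b1 b2 : ℕ}

lemma evalc_encode (Mf : Str b1 →. Str b1) {c : Code}
    (hc : eval c = fun n =>
      Part.bind ((Encodable.decode (α := Str b1) n) : Part (Str b1)) fun a =>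
        (Mf a).map Encodable.encode)
    (y : Str b1) : eval c (Encodable.encode y) = (Mf y).map Encodable.encode := by
  rw [hc]
  simp [Encodable.encodek]

lemma machF_dom_witness (Mf : Str b1 →. Str b1) {c : Code}
    (hc : eval c = fun n =>
      Part.bind ((Encodable.decode (α := Str b1) n) : Part (Str b1)) fun a =>
        (Mf a).map Encodable.encode)
    {p : Str b2} (h : (machF b1 b2 c p).Dom) :
    ∃ y, Valid b1 b2 y p ∧ (Mf y).Dom := by
  obtain ⟨v, hv⟩ := Part.dom_iff_mem.1 h
  obtain ⟨n, hn⟩ := Nat.rfindOpt_spec hv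
  simp only [Option.mem_def, Option.bind_eq_some_iff] at hn
  obtain ⟨y, hy, hval⟩ := hn
  by_cases hvp : Valid b1 b2 y p
  · rw [if_pos hvp] at hval
    have hev : v ∈ eval c (Encodable.encode y) := evaln_sound hval
    rw [evalc_encode Mf hc] at hev
    obtain ⟨out, hout, -⟩ := (Part.mem_map_iff _).1 hev
    exact ⟨y, hvp, Part.dom_iff_mem.2 ⟨out, hout⟩⟩
  · rw [if_neg hvp] at hval
    exact absurd hval (by simp)

lemma machF_eq (hb1 : 2 ≤ b1) (hb2 : 2 ≤ b2) (Mf : Str b1 →. Str b1)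
    (hpf : PrefixFree Mf.Dom) {c : Code}
    (hc : eval c = fun n =>
      Part.bind ((Encodable.decode (α := Str b1) n) : Part (Str b1)) fun a =>
        (Mf a).map Encodable.encode)
    {p : Str b2} {y : Str b1} {out : Str b1}
    (hv : Valid b1 b2 y p) (hout : out ∈ Mf y) :
    machF b1 b2 c p = Part.some (Encodable.encode out) := by
  apply rfindOpt_eq_some
  · -- existence
    have hev : Encodable.encode out ∈ eval c (Encodable.encode y) := by
      rw [evalc_encode Mf hc]
      exact (Part.mem_map_iff _).2 ⟨out, hout, rfl⟩
    obtain ⟨k, hk⟩ := evaln_complete.1 hev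
    refine ⟨Nat.pair (Encodable.encode y) k, ?_⟩
    simp only [Nat.unpair_pair, Encodable.encodek, Option.bind_eq_some_iff]
    exact ⟨y, rfl, by rw [if_pos hv]; exact hk⟩
  · -- uniqueness
    intro n b hn
    simp only [Option.bind_eq_some_iff] at hn
    obtain ⟨y', hy', hval⟩ := hn
    by_cases hvp : Valid b1 b2 y' p
    · rw [if_pos hvp] at hval
      have hev : b ∈ eval c (Encodable.encode y') := evaln_sound hval
      rw [evalc_encode Mf hc] at hev
      obtain ⟨out', hout', hbe⟩ := (Part.mem_map_iff _).1 hev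
      have hyy : y' = y := by
        have hdom : y ∈ Mf.Dom := Part.dom_iff_mem.2 ⟨out, hout⟩
        have hdom' : y' ∈ Mf.Dom := Part.dom_iff_mem.2 ⟨out', hout'⟩
        rcases valid_prefix_comparable (by omega) (by omega) hvp hv
            (List.prefix_refl p) with hcomp | hcomp
        · exact hpf y' hdom' y hdom hcomp
        · exact (hpf y hdom y' hdom' hcomp).symm
      subst hyy
      have : out' = out := Part.mem_unique hout' hout
      rw [← hbe, this]
    · rw [if_neg hvp] at hval
      exact absurd hval (by simp)

end MachineSim

/-- search for an element of the c.e. set (domain of the function coded by `cA`)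
with `g`-image `v` -/
def sFn (i : ℕ) (cA : Code) (g : Str i → Str 2) (v : Str 2) : Part (Str i) :=
  Nat.rfindOpt fun n =>
    (Encodable.decode (α := Str i) n.unpair.1).bind fun u =>
      if (evaln n.unpair.2 cA (Encodable.encode u)).isSome ∧ g u = v then some u else none

lemma sFn_partrec (i : ℕ) (cA : Code) {g : Str i → Str 2} (hg : Computable g) :
    Partrec (sFn i cA g) := by
  apply Partrec.rfindOpt
  have hdec : Computable fun q : Str 2 × ℕ => (Encodable.decode (α := Str i) q.2.unpair.1) :=
    Primrec.to_comp (Primrec.decode.comp (Primrec.fst.comp (Primrec.unpair.comp Primrec.snd)))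
  apply Computable.option_bind hdec
  have hb1 : Computable fun x : (Str 2 × ℕ) × Str i =>
      (evaln x.1.2.unpair.2 cA (Encodable.encode x.2)).isSome :=
    Primrec.to_comp (Primrec.option_isSome.comp (primrec_evaln.comp
      (((Primrec.snd.comp (Primrec.unpair.comp (Primrec.snd.comp Primrec.fst))).pair
        (Primrec.const cA)).pair (Primrec.encode.comp Primrec.snd))))
  have hb2 : Computable fun x : (Str 2 × ℕ) × Str i => decide (g x.2 = x.1.1) :=
    Primrec.eq.decide.to_comp.comp (hg.comp Computable.snd) (Computable.fst.comp Computable.fst)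
  have hcomposite : Computable fun x : (Str 2 × ℕ) × Str i =>
      bif (evaln x.1.2.unpair.2 cA (Encodable.encode x.2)).isSome then
        (bif decide (g x.2 = x.1.1) then some x.2 else none) else none :=
    Computable.cond hb1
      (Computable.cond hb2 (Computable.option_some.comp Computable.snd)
        (Computable.const none))
      (Computable.const none)
  have hfin : Computable fun x : (Str 2 × ℕ) × Str i =>
      if (evaln x.1.2.unpair.2 cA (Encodable.encode x.2)).isSome ∧ g x.2 = x.1.1
        then some x.2 else none := by
    refine hcomposite.of_eq fun x => ?_
    by_cases h1 : (evaln x.1.2.unpair.2 cA (Encodable.encode x.2)).isSome <;>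
      by_cases h2 : g x.2 = x.1.1 <;> simp [h1, h2]
  exact hfin.to₂

lemma sFn_eq {i : ℕ} (fA : Str i →. Str i) {cA : Code}
    (hcA : eval cA = fun n =>
      Part.bind ((Encodable.decode (α := Str i) n) : Part (Str i)) fun a =>
        (fA a).map Encodable.encode)
    {A : Set (Str i)} (hA : A = fA.Dom) {g : Str i → Str 2} (hinj : Set.InjOn g A)
    {u : Str i} (hu : u ∈ A) : sFn i cA g (g u) = Part.some u := by
  apply rfindOpt_eq_some
  · have hdom : (fA u).Dom := by rw [hA] at hu; exact hu
    obtain ⟨out, hout⟩ := Part.dom_iff_mem.1 hdom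
    have hev : Encodable.encode out ∈ eval cA (Encodable.encode u) := by
      rw [evalc_encode fA hcA]
      exact (Part.mem_map_iff _).2 ⟨out, hout, rfl⟩
    obtain ⟨k, hk⟩ := evaln_complete.1 hev
    refine ⟨Nat.pair (Encodable.encode u) k, ?_⟩
    simp only [Nat.unpair_pair, Encodable.encodek, Option.bind_eq_some_iff]
    refine ⟨u, rfl, ?_⟩
    rw [if_pos ⟨Option.isSome_iff_exists.2 ⟨_, hk⟩, rfl⟩]
  · intro n b hn
    simp only [Option.bind_eq_some_iff] at hn
    obtain ⟨u', hu', hval⟩ := hn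
    by_cases hcond : (evaln n.unpair.2 cA (Encodable.encode u')).isSome ∧ g u' = g u
    · rw [if_pos hcond] at hval
      obtain ⟨hsome, hgu⟩ := hcond
      obtain ⟨val, hvmem⟩ := Option.isSome_iff_exists.1 hsome
      have hev : val ∈ eval cA (Encodable.encode u') := evaln_sound hvmem
      rw [evalc_encode fA hcA] at hev
      obtain ⟨out', hout', -⟩ := (Part.mem_map_iff _).1 hev
      have hu'A : u' ∈ A := by rw [hA]; exact Part.dom_iff_mem.2 ⟨out', hout'⟩
      have : u' = u := hinj hu'A hu hgu
      rw [← this]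
      exact (Option.some_inj.1 hval).symm
    · rw [if_neg hcond] at hval
      exact absurd hval (by simp)

/-- the binary machine simulating `Ui` through interval codes and postcomposing with `g` -/
def T2f (i : ℕ) (c : Code) (g : Str i → Str 2) : Str 2 →. Str 2 := fun p =>
  (machF i 2 c p).bind fun v =>
    Part.ofOption ((Encodable.decode (α := Str i) v).map g)

lemma T2f_partrec (i : ℕ) (c : Code) {g : Str i → Str 2} (hg : Computable g) :
    Partrec (T2f i c g) := by
  apply Partrec.bind (machF_partrec i 2 c)
  exact (Computable.ofOption (Computable.option_map
    (Computable.decode.comp Computable.snd) (hg.comp Computable.snd).to₂)).to₂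

lemma dir1 {i : ℕ} (hi : 2 ≤ i) (Ui : Machine i) {g : Str i → Str 2} (hgc : Computable g) :
    ∃ T2 : Machine 2, ∀ u y, u ∈ Ui.f y →
      ∃ p : Str 2, g u ∈ T2.f p ∧ p.length = encLen i 2 y.length := by
  obtain ⟨c, hc⟩ := Code.exists_code.1 Ui.partrec
  refine ⟨⟨T2f i c g, T2f_partrec i c hgc, ?_⟩, ?_⟩
  · intro p hp p' hp' hpre
    obtain ⟨w, hw⟩ := Part.dom_iff_mem.1 hp
    obtain ⟨v, hvm, -⟩ := Part.mem_bind_iff.1 hw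
    obtain ⟨y, hval, hydom⟩ := machF_dom_witness Ui.f hc (Part.dom_iff_mem.2 ⟨v, hvm⟩)
    obtain ⟨w', hw'⟩ := Part.dom_iff_mem.1 hp'
    obtain ⟨v', hvm', -⟩ := Part.mem_bind_iff.1 hw'
    obtain ⟨y', hval', hydom'⟩ := machF_dom_witness Ui.f hc (Part.dom_iff_mem.2 ⟨v', hvm'⟩)
    rcases valid_prefix_comparable (by omega) (by omega) hval hval' hpre with h | h
    · exact valid_prefix_eq hval hval' (Ui.prefixFree _ hydom _ hydom' h) hpre
    · exact valid_prefix_eq hval hval' (Ui.prefixFree _ hydom' _ hydom h).symm hpre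
  · intro u y hy
    obtain ⟨p, hp⟩ := exists_valid (b2 := 2) hi (by norm_num) y
    refine ⟨p, ?_, hp.1⟩
    show g u ∈ T2f i c g p
    rw [T2f, machF_eq (b2 := 2) hi (by norm_num) Ui.f Ui.prefixFree hc hp hy]
    apply Part.mem_bind_iff.2 ⟨Encodable.encode u, Part.mem_some _, ?_⟩
    simp [Encodable.encodek]

/-- the machine over alphabet `i` simulating `U2` through interval codes and
searching the c.e. set for a `g`-preimage -/
def TIf (i : ℕ) (c cA : Code) (g : Str i → Str 2) : Str i →. Str i := fun q =>
  (machF 2 i c q).bind fun v =>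
    (Part.ofOption (Encodable.decode (α := Str 2) v)).bind fun w => sFn i cA g w

lemma TIf_partrec (i : ℕ) (c cA : Code) {g : Str i → Str 2} (hg : Computable g) :
    Partrec (TIf i c cA g) := by
  apply Partrec.bind (machF_partrec 2 i c)
  have hinner : Partrec fun a : Str i × ℕ =>
      (Part.ofOption (Encodable.decode (α := Str 2) a.2)).bind fun w => sFn i cA g w := by
    have h1 : Partrec fun a : Str i × ℕ =>
        (Part.ofOption (Encodable.decode (α := Str 2) a.2)) :=
      Computable.ofOption (Computable.decode.comp Computable.snd)
    have h2 : Partrec fun x : (Str i × ℕ) × Str 2 => sFn i cA g x.2 :=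
      (sFn_partrec i cA hg).comp Computable.snd
    exact Partrec.bind h1 h2.to₂
  exact hinner.to₂

lemma dir2 {i : ℕ} (hi : 2 ≤ i) (U2 : Machine 2) (fA : Str i →. Str i) (hfA : Partrec fA)
    {A : Set (Str i)} (hA : A = fA.Dom) {g : Str i → Str 2} (hgc : Computable g)
    (hinj : Set.InjOn g A) :
    ∃ Ti : Machine i, ∀ u p, u ∈ A → g u ∈ U2.f p →
      ∃ q : Str i, u ∈ Ti.f q ∧ q.length = encLen 2 i p.length := by
  obtain ⟨c, hc⟩ := Code.exists_code.1 U2.partrec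
  obtain ⟨cA, hcA⟩ := Code.exists_code.1 hfA
  refine ⟨⟨TIf i c cA g, TIf_partrec i c cA hgc, ?_⟩, ?_⟩
  · intro q hq q' hq' hpre
    obtain ⟨w, hw⟩ := Part.dom_iff_mem.1 hq
    obtain ⟨v, hvm, -⟩ := Part.mem_bind_iff.1 hw
    obtain ⟨p, hval, hpdom⟩ := machF_dom_witness U2.f hc (Part.dom_iff_mem.2 ⟨v, hvm⟩)
    obtain ⟨w', hw'⟩ := Part.dom_iff_mem.1 hq'
    obtain ⟨v', hvm', -⟩ := Part.mem_bind_iff.1 hw'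
    obtain ⟨p', hval', hpdom'⟩ := machF_dom_witness U2.f hc (Part.dom_iff_mem.2 ⟨v', hvm'⟩)
    rcases valid_prefix_comparable (by omega) (by omega) hval hval' hpre with h | h
    · exact valid_prefix_eq hval hval' (U2.prefixFree _ hpdom _ hpdom' h) hpre
    · exact valid_prefix_eq hval hval' (U2.prefixFree _ hpdom' _ hpdom h).symm hpre
  · intro u p hu hp
    obtain ⟨q, hq⟩ := exists_valid (b1 := 2) (by norm_num) hi p
    refine ⟨q, ?_, hq.1⟩
    show u ∈ TIf i c cA g q
    rw [TIf, machF_eq (b1 := 2) (by norm_num) hi U2.f U2.prefixFree hc hq hp]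
    apply Part.mem_bind_iff.2 ⟨Encodable.encode (g u), Part.mem_some _, ?_⟩
    apply Part.mem_bind_iff.2 ⟨g u, ?_, ?_⟩
    · simp [Encodable.encodek]
    · rw [sFn_eq fA hcA hA hinj hu]
      exact Part.mem_some u

lemma Hc_le {b : ℕ} (T : Machine b) {x y : Str b} (h : x ∈ T.f y) :
    Hc T x ≤ (y.length : ℝ≥0∞) := sInf_le ⟨y, rfl, h⟩

lemma Hc_cases {b : ℕ} (T : Machine b) (x : Str b) :
    Hc T x = ⊤ ∨ ∃ y, x ∈ T.f y ∧ Hc T x = (y.length : ℝ≥0∞) := by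
  by_cases h : ∃ y : Str b, x ∈ T.f y
  · right
    have hS : {n : ℕ | ∃ y : Str b, y.length = n ∧ x ∈ T.f y}.Nonempty := by
      obtain ⟨y, hy⟩ := h; exact ⟨y.length, y, rfl, hy⟩
    obtain ⟨y, hylen, hy⟩ := Nat.sInf_mem hS
    refine ⟨y, hy, le_antisymm (Hc_le T hy) ?_⟩
    apply le_sInf
    rintro m ⟨y', hm, hy'⟩
    have h4 : sInf {n : ℕ | ∃ y : Str b, y.length = n ∧ x ∈ T.f y} ≤ y'.length :=
      Nat.sInf_le ⟨y', rfl, hy'⟩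
    rw [← hylen] at h4
    rw [← hm]
    exact_mod_cast h4
  · left
    have hempty : {n : ℝ≥0∞ | ∃ y : Str b, (y.length : ℝ≥0∞) = n ∧ x ∈ T.f y} = ∅ := by
      ext m
      simp only [Set.mem_setOf_eq, Set.mem_empty_iff_false, iff_false, not_exists]
      rintro y ⟨-, hy⟩
      exact h ⟨y, hy⟩
    rw [Hc, hempty, sInf_empty]

end InvAux

/-- Invariance theorem: for a c.e. set `A` and a Gödel numbering `g : A → X₂*`,
there is a constant `c > 0` with `|H₂(g(u)) − log₂(i)·Hᵢ(u)| ≤ c` for all `u ∈ A`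
(the absolute difference is expressed by the two inequalities). -/
theorem stmt_1 {i : ℕ} (hi : 2 ≤ i) (Ui : Machine i) (hUi : IsUniversal Ui)
    (U2 : Machine 2) (hU2 : IsUniversal U2)
    (A : Set (Str i)) (hA : CEset A) (g : Str i → Str 2) (hg : GoedelNumbering A g) :
    ∃ c : ℝ, 0 < c ∧ ∀ u ∈ A,
      Hc U2 (g u) ≤ ENNReal.ofReal (Real.logb 2 i) * Hc Ui u + ENNReal.ofReal c ∧
      ENNReal.ofReal (Real.logb 2 i) * Hc Ui u ≤ Hc U2 (g u) + ENNReal.ofReal c := by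

  classical
  obtain ⟨hgc, hginj⟩ := hg
  obtain ⟨fA, hfA, hAdom⟩ := hA
  obtain ⟨T2, hT2⟩ := InvAux.dir1 hi Ui hgc
  obtain ⟨Ti, hTi⟩ := InvAux.dir2 hi U2 fA hfA hAdom hgc hginj
  obtain ⟨c2, hc2⟩ := hU2 T2
  obtain ⟨ci, hci⟩ := hUi Ti
  have hlb1 : 1 ≤ Real.logb 2 i := InvAux.one_le_logb hi
  set lb := Real.logb 2 i with hlb
  set C : ℝ := lb * (ci + 2) + (c2 + 3) with hC
  have hcir : (0:ℝ) ≤ (ci:ℝ) := Nat.cast_nonneg _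
  have hc2r : (0:ℝ) ≤ (c2:ℝ) := Nat.cast_nonneg _
  have hCpos : 0 < C := by nlinarith
  refine ⟨C, hCpos, ?_⟩
  intro u hu
  constructor
  · rcases InvAux.Hc_cases Ui u with htop | ⟨y, hy, hHc⟩
    · rw [htop]
      have hne : ENNReal.ofReal lb ≠ 0 := by
        rw [Ne, ENNReal.ofReal_eq_zero]
        push_neg
        linarith
      rw [ENNReal.mul_top hne, top_add]
      exact le_top
    · obtain ⟨p, hmem, hplen⟩ := hT2 u y hy
      have hylr : (0:ℝ) ≤ (y.length : ℝ) := Nat.cast_nonneg _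
      have hreal : (InvAux.encLen i 2 y.length : ℝ) + c2 ≤ lb * y.length + C := by
        have hb := InvAux.encLen_le_logb1 hi y.length
        nlinarith
      calc Hc U2 (g u) ≤ Hc T2 (g u) + (c2 : ℝ≥0∞) := hc2 _
        _ ≤ (p.length : ℝ≥0∞) + c2 := add_le_add_left (InvAux.Hc_le T2 hmem) _
        _ = ENNReal.ofReal ((InvAux.encLen i 2 y.length : ℝ) + c2) := by
            rw [hplen, ENNReal.ofReal_add (by positivity) (by positivity),
              ENNReal.ofReal_natCast, ENNReal.ofReal_natCast]
        _ ≤ ENNReal.ofReal (lb * y.length + C) := ENNReal.ofReal_le_ofReal hreal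
        _ = ENNReal.ofReal lb * Hc Ui u + ENNReal.ofReal C := by
            rw [ENNReal.ofReal_add (mul_nonneg (by linarith) hylr) (le_of_lt hCpos),
              ENNReal.ofReal_mul (by linarith), ENNReal.ofReal_natCast, hHc]
  · rcases InvAux.Hc_cases U2 (g u) with htop | ⟨p, hp, hHc2⟩
    · rw [htop, top_add]
      exact le_top
    · obtain ⟨q, hmem, hqlen⟩ := hTi u p hu hp
      have h1 : Hc Ui u ≤ ((InvAux.encLen 2 i p.length + ci : ℕ) : ℝ≥0∞) := by
        calc Hc Ui u ≤ Hc Ti u + (ci : ℝ≥0∞) := hci u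
          _ ≤ (q.length : ℝ≥0∞) + ci := add_le_add_left (InvAux.Hc_le Ti hmem) _
          _ = _ := by rw [hqlen, Nat.cast_add]
      have hreal : lb * ((InvAux.encLen 2 i p.length : ℝ) + ci) ≤ (p.length : ℝ) + C := by
        have hb := InvAux.encLen_le_logb2 hi p.length
        nlinarith
      calc ENNReal.ofReal lb * Hc Ui u
          ≤ ENNReal.ofReal lb * ((InvAux.encLen 2 i p.length + ci : ℕ) : ℝ≥0∞) :=
            mul_le_mul_right h1 _
        _ = ENNReal.ofReal (lb * ((InvAux.encLen 2 i p.length : ℝ) + ci)) := by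
            rw [← ENNReal.ofReal_natCast (InvAux.encLen 2 i p.length + ci),
              ← ENNReal.ofReal_mul (by linarith)]
            congr 1
            push_cast
            ring
        _ ≤ ENNReal.ofReal ((p.length : ℝ) + C) := ENNReal.ofReal_le_ofReal hreal
        _ = Hc U2 (g u) + ENNReal.ofReal C := by
            rw [ENNReal.ofReal_add (by positivity) (le_of_lt hCpos),
              ENNReal.ofReal_natCast, hHc2]
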